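/- Let B be a finite left brace of order p^n with n + 2 ≤ p. If the multiplicative group (B,·) is abelian, then (B,·) is isomorphic to (B,+). -/

import Mathlib

open Unitization Finset

section BraceRing
variable {B : Type*} [AddCommGroup B] [Group B]

theorem brace_one_eq_zero (brace : ∀ a b c : B, a * (b + c) + a = a * b + a * c) :
    (1 : B) = 0 := by
  have h := brace 1 0 0
  simpa using h

/-- The nonunital commutative ring attached to an abelian brace. -/
def braceRing (brace : ∀ a b c : B, a * (b + c) + a = a * b + a * c)
    (hcomm : ∀ a b : B, a * b = b * a) : NonUnitalCommRing B := by
  have h10 : (1 : B) = 0 := brace_one_eq_zero brace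
  have mzero : ∀ b : B, (0 : B) * b = b := by
    intro b; rw [← h10, one_mul]
  have mzero' : ∀ b : B, b * (0 : B) = b := by
    intro b; rw [hcomm]; exact mzero b
  have madd : ∀ a b c : B, a * (b + c) - a - (b + c) =
      (a * b - a - b) + (a * c - a - c) := by
    intro a b c
    have h := brace a b c
    have : a * (b + c) = a * b + a * c - a := eq_sub_of_add_eq h
    rw [this]; abel
  have madd' : ∀ a b c : B, (a + b) * c - (a + b) - c =
      (a * c - a - c) + (b * c - b - c) := by
    intro a b c
    rw [hcomm (a+b) c, hcomm a c, hcomm b c]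
    calc c*(a+b) - (a+b) - c = c*(a+b) - c - (a+b) := by abel
      _ = (c*a - c - a) + (c*b - c - b) := madd c a b
      _ = (c*a - a - c) + (c*b - b - c) := by abel
  exact
  { (inferInstance : AddCommGroup B) with
    mul := fun a b => a * b - a - b
    left_distrib := fun a b c => madd a b c
    right_distrib := fun a b c => madd' a b c
    zero_mul := fun b => by
      show (0 : B) * b - 0 - b = 0
      rw [mzero b]; abel
    mul_zero := fun b => by
      show b * (0 : B) - b - 0 = 0
      rw [mzero' b]; abel
    mul_comm := fun a b => by
      show a * b - a - b = b * a - b - a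
      rw [hcomm a b]; abel
    mul_assoc := fun a b c => by
      show (a * b - a - b) * c - (a * b - a - b) - c
         = a * (b * c - b - c) - a - (b * c - b - c)
      have k1 : a * b = a * b - a - b + a + b := by abel
      have k2 : b * c = b * c - b - c + b + c := by abel
      have e1 : (a * b) * c - (a * b) - c
          = ((a * b - a - b) * c - (a * b - a - b) - c) + (a * c - a - c) + (b * c - b - c) := by
        conv_lhs => rw [k1]
        rw [madd' (a * b - a - b + a) b c, madd' (a * b - a - b) a c]
      have e2 : a * (b * c) - a - (b * c)
          = (a * (b * c - b - c) - a - (b * c - b - c)) + (a * b - a - b) + (a * c - a - c) := by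
        conv_lhs => rw [k2]
        rw [madd a (b * c - b - c + b) c, madd a (b * c - b - c) b]
      have hX : (a * b - a - b) * c - (a * b - a - b) - c
          = ((a * b) * c - (a * b) - c) - (a * c - a - c) - (b * c - b - c) := by
        rw [e1]; abel
      have hY : a * (b * c - b - c) - a - (b * c - b - c)
          = (a * (b * c) - a - (b * c)) - (a * b - a - b) - (a * c - a - c) := by
        rw [e2]; abel
      rw [hX, hY, mul_assoc a b c]
      abel }
end BraceRing

theorem nilpow (U : Type*) [CommRing U] (I : Ideal U)
    (hIfg : I.FG) (hjac : I ≤ Ideal.jacobson ⊥)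
    (p n : ℕ) (hp : p.Prime)
    (hIfin : (I : Set U).Finite) (hcardI : Nat.card ↥I = p ^ n) :
    I ^ (n + 1) = ⊥ := by
  have ple : 2 ≤ p := hp.two_le
  have hle1 : ∀ k : ℕ, I ^ (k + 1) ≤ I := fun k => by
    have := Ideal.pow_le_pow_right (I := I) (m := 1) (n := k + 1) (by omega)
    simpa using this
  have nak : ∀ k : ℕ, I ^ (k + 1) = I ^ (k + 2) → I ^ (k + 1) = ⊥ := by
    intro k h
    refine Submodule.eq_bot_of_le_smul_of_le_jacobson_bot I (I ^ (k + 1))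
      (Submodule.FG.pow hIfg _) ?_ hjac
    rw [Ideal.smul_eq_mul, ← pow_succ']
    exact le_of_eq h
  have hfink : ∀ k : ℕ, ((I ^ (k+1) : Ideal U) : Set U).Finite := fun k =>
    hIfin.subset (hle1 k)
  have hdvd : ∀ k : ℕ, Nat.card ↥(I ^ (k+1)) ∣ p ^ n := by
    intro k
    rw [← hcardI]
    exact AddSubgroup.card_dvd_of_le (H := (I ^ (k+1)).toAddSubgroup)
      (K := I.toAddSubgroup) (hle1 k)
  have bot_of_card_one : ∀ J : Ideal U, Nat.card ↥J = 1 → J = ⊥ := by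
    intro J hJ
    have hsub : Subsingleton ↥J := (Nat.card_eq_one_iff_unique.1 hJ).1
    rw [Submodule.eq_bot_iff]
    intro x hx
    exact congrArg Subtype.val (Subsingleton.elim (⟨x, hx⟩ : ↥J) ⟨0, J.zero_mem⟩)
  have main : ∀ k : ℕ, I ^ (k + 1) = ⊥ ∨ Nat.card ↥(I ^ (k+1)) * p ^ k ∣ p ^ n := by
    intro k
    induction k with
    | zero => right; simpa using hdvd 0
    | succ k ih =>
      rcases ih with h | h
      · left
        have h2 : I ^ (k + 2) ≤ I ^ (k + 1) := Ideal.pow_le_pow_right (by omega)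
        rw [h] at h2; exact le_bot_iff.1 h2
      · by_cases hb : I ^ (k + 2) = ⊥
        · left; exact hb
        · right
          have hne : I ^ (k + 1) ≠ I ^ (k + 2) := fun he => hb (he ▸ nak k he)
          have hlt : ((I ^ (k+2) : Ideal U) : Set U) ⊂ ((I ^ (k+1) : Ideal U) : Set U) := by
            refine ⟨Ideal.pow_le_pow_right (by omega), fun hsub => ?_⟩
            exact hne (le_antisymm (fun x hx => hsub hx) (Ideal.pow_le_pow_right (by omega)))
          have hcardlt : Nat.card ↥(I ^ (k+2)) < Nat.card ↥(I ^ (k+1)) := by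
            have h3 := Set.ncard_lt_ncard hlt (hfink k)
            rw [← Nat.card_coe_set_eq, ← Nat.card_coe_set_eq] at h3; exact h3
          have hd2 : Nat.card ↥(I ^ (k+2)) ∣ Nat.card ↥(I ^ (k+1)) :=
            AddSubgroup.card_dvd_of_le (H := (I ^ (k+2)).toAddSubgroup)
              (K := (I ^ (k+1)).toAddSubgroup) (Ideal.pow_le_pow_right (by omega))
          have hd1 : Nat.card ↥(I ^ (k+1)) ∣ p ^ n := hdvd k
          obtain ⟨a, ha, hA⟩ := (Nat.dvd_prime_pow hp).1 hd1
          obtain ⟨b, hb', hB⟩ := (Nat.dvd_prime_pow hp).1 (hd2.trans hd1)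
          have hba : b < a := by
            rw [hA, hB] at hcardlt
            exact (Nat.pow_lt_pow_iff_right ple).1 hcardlt
          have : Nat.card ↥(I ^ (k+2)) * p ^ (k+1) = p ^ (b + k + 1) := by
            rw [hB]; ring
          rw [this]
          calc p ^ (b + k + 1) ∣ p ^ (a + k) := pow_dvd_pow p (by omega)
            _ = Nat.card ↥(I ^ (k+1)) * p ^ k := by rw [hA]; ring
            _ ∣ p ^ n := h
  rcases main n with h | h
  · exact h
  · apply bot_of_card_one
    have hpos : 0 < p ^ n := Nat.pow_pos (n := n) (by omega)
    have h2 : Nat.card ↥(I ^ (n + 1)) * p ^ n ∣ 1 * p ^ n := by simpa using h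
    have h3 := (Nat.mul_dvd_mul_iff_right hpos).1 h2
    exact Nat.dvd_one.1 h3

set_option maxHeartbeats 2000000 in
theorem brace_aux (p n : ℕ) (hp : p.Prime) (hn : n + 2 ≤ p)
    (A : Type*) [NonUnitalCommRing A] [Fintype A]
    (hcard : Fintype.card A = p ^ n)
    (hqr : ∀ a : A, ∃ b : A, a + b + a * b = 0) :
    ∃ f : A → A, Function.Bijective f ∧ ∀ x y : A, f (x + y) = f x + f y + f x * f y := by
  classical
  set U := Unitization ℤ A with hU
  set I : @Ideal U CommSemiring.toSemiring := RingHom.ker (Unitization.fstHom ℤ A).toRingHom with hI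
  have memI : ∀ z : U, z ∈ I ↔ ∃ a : A, (a : U) = z := by
    intro z
    constructor
    · intro hz
      have h0 : z.fst = 0 := hz
      exact ⟨z.snd, by ext <;> simp [h0]⟩
    · rintro ⟨a, rfl⟩
      show (Unitization.fstHom ℤ A) (a : U) = 0
      simp
  have inrI : ∀ a : A, (a : U) ∈ I := fun a => (memI _).2 ⟨a, rfl⟩
  have hIfg : I.FG := by
    refine Submodule.fg_def.2 ⟨Set.range (fun a : A => (a : U)), Set.finite_range _, le_antisymm ?_ ?_⟩
    · rw [Submodule.span_le]
      rintro _ ⟨a, rfl⟩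
      exact inrI a
    · intro z hz
      obtain ⟨a, rfl⟩ := (memI z).1 hz
      exact Submodule.subset_span ⟨a, rfl⟩
  have hjac : I ≤ @Ideal.jacobson U CommRing.toRing ⊥ := by
    intro z hz
    rw [Ideal.mem_jacobson_bot]
    intro y
    obtain ⟨c, hc⟩ := (memI (z * y)).1 (Ideal.mul_mem_right y I hz)
    obtain ⟨d, hd⟩ := hqr c
    have key : ∀ u v : A, ((u : U) + 1) * ((v : U) + 1) = 1 + ((u + v + u * v : A) : U) := by
      intro u v
      rw [Unitization.inr_add, Unitization.inr_add, Unitization.inr_mul]; ring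
    refine isUnit_iff_exists.2 ⟨1 + (d : U), ?_, ?_⟩
    · have h1 : z * y + 1 = (c : U) + 1 := by rw [← hc]
      rw [h1, add_comm 1 (d : U), key, hd]; simp
    · have h1 : z * y + 1 = (c : U) + 1 := by rw [← hc]
      rw [h1, add_comm 1 (d : U), key, add_comm d c, mul_comm d c, hd]; simp
  -- torsion
  have htorA : ∀ a : A, (p : ℤ) ^ n • a = 0 := by
    intro a
    have h := card_nsmul_eq_zero (x := a)
    rw [hcard] at h
    have : ((p ^ n : ℕ) : ℤ) • a = 0 := by rw [natCast_zsmul]; exact h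
    simpa using this
  have htor : ∀ z : U, z ∈ I → (p : ℤ) ^ n • z = 0 := by
    intro z hz
    obtain ⟨a, rfl⟩ := (memI z).1 hz
    rw [← Unitization.inr_smul, htorA, Unitization.inr_zero]
  -- card of I
  have eqv : A ≃ ↥I := by
    refine Equiv.ofBijective (fun a => ⟨(a : U), inrI a⟩) ⟨?_, ?_⟩
    · intro a b hab
      exact Unitization.inr_injective (congrArg Subtype.val hab)
    · rintro ⟨z, hz⟩
      obtain ⟨a, rfl⟩ := (memI z).1 hz
      exact ⟨a, rfl⟩
  have hcardI : Nat.card ↥I = p ^ n := by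
    rw [← Nat.card_congr eqv, Nat.card_eq_fintype_card, hcard]
  have hIfin : (I : Set U).Finite := by
    have : Finite ↥I := Finite.of_equiv A eqv
    exact Set.toFinite _
  have hnil : I ^ (n + 1) = ⊥ := by have := nilpow U I hIfg hjac p n hp hIfin hcardI; exact this
  -- membership of monomials
  have hle1 : ∀ k : ℕ, 1 ≤ k → I ^ k ≤ I := fun k hk => by
    have := Ideal.pow_le_pow_right (I := I) (m := 1) (n := k) hk
    simpa using this
  have memIpow : ∀ (x y : A) (i k : ℕ), ((x : U)) ^ i * ((y : U)) ^ k ∈ I ^ (i + k) := by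
    intro x y i k
    rw [pow_add]
    exact Ideal.mul_mem_mul (Ideal.pow_mem_pow (inrI x) i) (Ideal.pow_mem_pow (inrI y) k)
  have memI1 : ∀ (x y : A) (i k : ℕ), 1 ≤ i + k → ((x : U)) ^ i * ((y : U)) ^ k ∈ I :=
    fun x y i k hk => hle1 _ hk (memIpow x y i k)
  have degnil : ∀ (x y : A) (i k : ℕ), n + 1 ≤ i + k → ((x : U)) ^ i * ((y : U)) ^ k = 0 := by
    intro x y i k hk
    have h1 : ((x : U)) ^ i * ((y : U)) ^ k ∈ I ^ (n+1) :=
      Ideal.pow_le_pow_right hk (memIpow x y i k)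
    rw [hnil] at h1
    simpa using h1
  -- coefficients
  set c : ℕ → ℤ := fun j => Nat.gcdA (j.factorial) (p ^ n) with hc
  have hfc : ∀ j : ℕ, j ≤ n → (p : ℤ) ^ n ∣ c j * (j.factorial : ℤ) - 1 := by
    intro j hj
    have hcop : Nat.Coprime (j.factorial) (p ^ n) := by
      apply Nat.Coprime.pow_right
      have : ¬ p ∣ j.factorial := by
        intro hdvd
        have := (Nat.Prime.dvd_factorial hp).1 hdvd
        omega
      exact ((Nat.Prime.coprime_iff_not_dvd hp).2 this).symm
    have hbez := Nat.gcd_eq_gcd_ab (j.factorial) (p ^ n)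
    rw [hcop] at hbez
    refine ⟨-(Nat.gcdB (j.factorial) (p ^ n)), ?_⟩
    push_cast at hbez ⊢
    linarith [hbez]
  set cc : ℕ → ℤ := fun j => if j = 0 then 1 else c j with hcc
  have hfcc : ∀ j : ℕ, j ≤ n → (p : ℤ) ^ n ∣ cc j * (j.factorial : ℤ) - 1 := by
    intro j hj
    by_cases h0 : j = 0
    · subst h0; simp [hcc]
    · rw [hcc]; simp only [if_neg h0]; exact hfc j hj
  -- kill lemma
  have hkill : ∀ (d : ℤ) (z : U), (p : ℤ) ^ n ∣ d → z ∈ I → d • z = 0 := by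
    intro d z hd hz
    obtain ⟨q, rfl⟩ := hd
    rw [mul_comm, mul_smul, htor z hz, smul_zero]
  -- coefficient congruence
  have keycoef : ∀ i k : ℕ, i + k ≤ n →
      (p : ℤ) ^ n ∣ c (i + k) * ((i + k).choose i : ℤ) - cc i * cc k := by
    intro i k hik
    have hi : i ≤ n := le_trans (Nat.le_add_right i k) hik
    have hk : k ≤ n := le_trans (Nat.le_add_left k i) hik
    obtain ⟨u, hu⟩ := hfcc i hi
    obtain ⟨v, hv⟩ := hfcc k hk
    obtain ⟨w, hw⟩ := hfc (i + k) hik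
    have hfact : ((i + k).choose i : ℤ) * (i.factorial : ℤ) * (k.factorial : ℤ)
        = ((i + k).factorial : ℤ) := by
      have h := Nat.choose_mul_factorial_mul_factorial (Nat.le_add_right i k)
      rw [Nat.add_sub_cancel_left] at h
      exact_mod_cast congrArg (Nat.cast : ℕ → ℤ) h
    have hcop : IsCoprime ((p : ℤ) ^ n) ((i.factorial : ℤ) * (k.factorial : ℤ)) := by
      rw [← Nat.cast_mul, ← Nat.cast_pow]
      rw [Nat.isCoprime_iff_coprime]
      apply Nat.Coprime.pow_left
      apply Nat.Coprime.mul_right <;>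
      · refine (Nat.Prime.coprime_iff_not_dvd hp).2 ?_
        intro hdvd
        have := (Nat.Prime.dvd_factorial hp).1 hdvd
        omega
    apply hcop.dvd_of_dvd_mul_right
    refine ⟨w - u * (cc k * (k.factorial : ℤ)) - v, ?_⟩
    have hu' : cc i * (i.factorial : ℤ) = 1 + (p:ℤ)^n * u := by linarith [hu]
    have hv' : cc k * (k.factorial : ℤ) = 1 + (p:ℤ)^n * v := by linarith [hv]
    have hw' : c (i+k) * ((i+k).factorial : ℤ) = 1 + (p:ℤ)^n * w := by linarith [hw]
    calc (c (i + k) * ((i + k).choose i : ℤ) - cc i * cc k) * ((i.factorial : ℤ) * (k.factorial : ℤ))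
        = c (i+k) * (((i + k).choose i : ℤ) * (i.factorial : ℤ) * (k.factorial : ℤ))
          - (cc i * (i.factorial : ℤ)) * (cc k * (k.factorial : ℤ)) := by ring
      _ = (1 + (p:ℤ)^n * w) - (1 + (p:ℤ)^n * u) * (1 + (p:ℤ)^n * v) := by
          rw [hfact, hw', hu', hv']
      _ = (p:ℤ)^n * (w - u * (1 + (p:ℤ)^n * v) - v) := by ring
      _ = (p:ℤ)^n * (w - u * (cc k * (k.factorial : ℤ)) - v) := by rw [← hv']
  
  -- handle n = 0 trivially
  rcases Nat.eq_zero_or_pos n with hn0 | hn1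
  · subst hn0
    have hsub : Subsingleton A := by
      rw [← Fintype.card_le_one_iff_subsingleton, hcard]
      simp
    exact ⟨id, Function.bijective_id, fun x y => Subsingleton.elim _ _⟩
  -- the truncated exponential, minus one
  set P : A → U := fun w => ∑ j ∈ Icc 1 n, c j • ((w : U)) ^ j with hP
  have hPmem : ∀ w : A, P w ∈ I := by
    intro w
    apply Submodule.sum_mem
    intro j hj
    rw [mem_Icc] at hj
    have h1 : ((w:U))^j ∈ I := by
      have h2 := memI1 w w j 0 (by omega)
      simpa using h2
    exact Submodule.smul_of_tower_mem I _ h1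
  have conv1 : ∀ (e : ℤ) (m : ℕ) (w : U), e • (w * (m : U)) = (e * (m : ℤ)) • w := by
    intro e m w
    rw [← nsmul_eq_mul', ← natCast_zsmul, smul_smul]
  -- the homomorphism identity
  have Phom : ∀ x y : A, P (x + y) = P x + P y + P x * P y := by
    intro x y
    set a : U := (x : U) with ha
    set b : U := (y : U) with hb
    set D : Finset (ℕ × ℕ) :=
      ((range (n+1)) ×ˢ (range (n+1))).filter (fun q => 1 ≤ q.1 + q.2 ∧ q.1 + q.2 ≤ n) with hD
    set E : Finset (ℕ × ℕ) :=
      ((range (n+1)) ×ˢ (range (n+1))).filter (fun q => 1 ≤ q.1 + q.2) with hE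
    set F : ℕ × ℕ → U :=
      fun q => (c (q.1+q.2) * (((q.1+q.2).choose q.1 : ℕ) : ℤ)) • (a ^ q.1 * b ^ q.2) with hF
    set G : ℕ × ℕ → U := fun q => (cc q.1 * cc q.2) • (a ^ q.1 * b ^ q.2) with hG
    have hab : ((x + y : A) : U) = a + b := by rw [ha, hb]; rfl
    -- left side
    have e1 : P (x + y) = ∑ q ∈ (Icc 1 n).sigma (fun j => range (j+1)),
        (c q.1 * ((q.1.choose q.2 : ℕ) : ℤ)) • (a ^ q.2 * b ^ (q.1 - q.2)) := by
      rw [hP]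
      simp only [hab]
      conv_rhs => rw [Finset.sum_sigma]
      apply Finset.sum_congr rfl
      intro j _
      rw [(Commute.all a b).add_pow, Finset.smul_sum]
      apply Finset.sum_congr rfl
      intro i _
      rw [conv1]
    have e2 : ∑ q ∈ (Icc 1 n).sigma (fun j => range (j+1)),
        (c q.1 * ((q.1.choose q.2 : ℕ) : ℤ)) • (a ^ q.2 * b ^ (q.1 - q.2))
        = ∑ q ∈ D, F q := by
      refine Finset.sum_nbij' (i := fun q => (q.2, q.1 - q.2))
        (j := fun q => ⟨q.1 + q.2, q.1⟩) ?_ ?_ ?_ ?_ ?_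
      · intro q hq
        simp only [Finset.mem_sigma, mem_Icc, Finset.mem_range] at hq
        simp only [hD, Finset.mem_filter, Finset.mem_product, Finset.mem_range]
        omega
      · intro q hq
        simp only [hD, Finset.mem_filter, Finset.mem_product, Finset.mem_range] at hq
        simp only [Finset.mem_sigma, mem_Icc, Finset.mem_range]
        omega
      · intro q hq
        simp only [Finset.mem_sigma, mem_Icc, Finset.mem_range] at hq
        have h2 : q.2 + (q.1 - q.2) = q.1 := by omega
        ext <;> simp [h2]
      · intro q hq
        simp only [hD, Finset.mem_filter, Finset.mem_product, Finset.mem_range] at hq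
        simp
      · intro q hq
        simp only [Finset.mem_sigma, mem_Icc, Finset.mem_range] at hq
        have h2 : q.2 + (q.1 - q.2) = q.1 := by omega
        rw [hF]
        simp only [h2]
    -- right side pieces
    have r1 : ∑ q ∈ (Icc 1 n) ×ˢ ({0} : Finset ℕ), G q = P x := by
      rw [Finset.sum_product, hP]
      apply Finset.sum_congr rfl
      intro i hi
      rw [mem_Icc] at hi
      rw [Finset.sum_singleton, hG]
      have h0 : cc i = c i := by rw [hcc]; simp only [if_neg (by omega : ¬ i = 0)]
      have h1 : cc 0 = 1 := by rw [hcc]; simp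
      simp [h0, h1, ha]
    have r2 : ∑ q ∈ ({0} : Finset ℕ) ×ˢ (Icc 1 n), G q = P y := by
      rw [Finset.sum_product, Finset.sum_singleton, hP]
      apply Finset.sum_congr rfl
      intro k hk
      rw [mem_Icc] at hk
      rw [hG]
      have h0 : cc k = c k := by rw [hcc]; simp only [if_neg (by omega : ¬ k = 0)]
      have h1 : cc 0 = 1 := by rw [hcc]; simp
      simp [h0, h1, hb]
    have r3 : ∑ q ∈ (Icc 1 n) ×ˢ (Icc 1 n), G q = P x * P y := by
      rw [hP, Finset.sum_mul_sum, Finset.sum_product]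
      apply Finset.sum_congr rfl
      intro i hi
      rw [mem_Icc] at hi
      apply Finset.sum_congr rfl
      intro k hk
      rw [mem_Icc] at hk
      simp only [hG]
      have h0 : cc i = c i := by rw [hcc]; simp only [if_neg (by omega : ¬ i = 0)]
      have h1 : cc k = c k := by rw [hcc]; simp only [if_neg (by omega : ¬ k = 0)]
      rw [h0, h1, smul_mul_smul_comm]
    -- split E into the three pieces
    have hsplit : E = (((Icc 1 n) ×ˢ ({0} : Finset ℕ)) ∪ (({0} : Finset ℕ) ×ˢ (Icc 1 n)))
        ∪ ((Icc 1 n) ×ˢ (Icc 1 n)) := by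
      ext q
      simp only [hE, Finset.mem_filter, Finset.mem_product, Finset.mem_range,
        Finset.mem_union, Finset.mem_singleton, mem_Icc]
      omega
    have hdisj1 : Disjoint ((Icc 1 n) ×ˢ ({0} : Finset ℕ)) (({0} : Finset ℕ) ×ˢ (Icc 1 n)) := by
      rw [Finset.disjoint_left]
      intro q hq hq'
      simp only [Finset.mem_product, Finset.mem_singleton, mem_Icc] at hq hq'
      omega
    have hdisj2 : Disjoint (((Icc 1 n) ×ˢ ({0} : Finset ℕ)) ∪ (({0} : Finset ℕ) ×ˢ (Icc 1 n)))
        ((Icc 1 n) ×ˢ (Icc 1 n)) := by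
      rw [Finset.disjoint_left]
      intro q hq hq'
      simp only [Finset.mem_union, Finset.mem_product, Finset.mem_singleton, mem_Icc] at hq hq'
      omega
    have eE : ∑ q ∈ E, G q = P x + P y + P x * P y := by
      rw [hsplit, Finset.sum_union hdisj2, Finset.sum_union hdisj1, r1, r2, r3]
    -- restrict E to D
    have eD : ∑ q ∈ D, G q = ∑ q ∈ E, G q := by
      apply Finset.sum_subset
      · intro q hq
        simp only [hD, Finset.mem_filter, Finset.mem_product, Finset.mem_range] at hq
        simp only [hE, Finset.mem_filter, Finset.mem_product, Finset.mem_range]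
        omega
      · intro q hq hq'
        simp only [hE, Finset.mem_filter, Finset.mem_product, Finset.mem_range] at hq
        simp only [hD, Finset.mem_filter, Finset.mem_product, Finset.mem_range] at hq'
        have hgt : n + 1 ≤ q.1 + q.2 := by omega
        simp only [hG, ha, hb]
        rw [degnil x y q.1 q.2 hgt, smul_zero]
    -- termwise comparison on D
    have eFG : ∑ q ∈ D, F q = ∑ q ∈ D, G q := by
      apply Finset.sum_congr rfl
      intro q hq
      simp only [hD, Finset.mem_filter, Finset.mem_product, Finset.mem_range] at hq
      have hmem : a ^ q.1 * b ^ q.2 ∈ I := by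
        rw [ha, hb]; exact memI1 x y q.1 q.2 hq.2.1
      have hz : (c (q.1 + q.2) * (((q.1+q.2).choose q.1 : ℕ) : ℤ) - cc q.1 * cc q.2)
          • (a ^ q.1 * b ^ q.2) = 0 := hkill _ _ (keycoef q.1 q.2 hq.2.2) hmem
      rw [sub_smul] at hz
      simp only [hF, hG]
      exact sub_eq_zero.1 hz
    rw [e1, e2, eFG, eD, eE]
  -- define f
  set f : A → A := fun w => (P w).snd with hf
  have hPf : ∀ w : A, ((f w : A) : U) = P w := by
    intro w
    have h0 : (P w).fst = 0 := hPmem w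
    rw [hf]
    ext <;> simp [h0]
  have hom : ∀ x y : A, f (x + y) = f x + f y + f x * f y := by
    intro x y
    apply Unitization.inr_injective (R := ℤ)
    show ((f (x+y) : A) : U) = ((f x + f y + f x * f y : A) : U)
    rw [hPf, Phom, ← hPf x, ← hPf y]
    rw [Unitization.inr_add, Unitization.inr_add, Unitization.inr_mul]
  -- injectivity
  have hinj : Function.Injective f := by
    intro x y hxy
    have hPxy : P x = P y := by rw [← hPf x, ← hPf y, hxy]
    set d : U := (x : U) - (y : U) with hd
    have hdI : d ∈ I := Submodule.sub_mem (R := U) I (inrI x) (inrI y)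
    set S : ℕ → U := fun j => ∑ i ∈ range j, (x:U)^i * (y:U)^(j-1-i) with hS
    have geom : ∀ j : ℕ, S j * d = (x:U)^j - (y:U)^j := fun j => (Commute.all (x:U) (y:U)).geom_sum₂_mul j
    set V : U := ∑ j ∈ Icc 2 n, c j • S j with hV
    have hVI : V ∈ I := by
      apply Submodule.sum_mem
      intro j hj
      rw [mem_Icc] at hj
      have hSI : S j ∈ I := by
        rw [hS]
        apply Submodule.sum_mem
        intro i hi
        rw [Finset.mem_range] at hi
        exact memI1 x y i (j - 1 - i) (by omega)
      exact Submodule.smul_of_tower_mem I _ hSI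
    have hWd : (c 1 • (1:U) + V) * d = 0 := by
      have hIcc : Icc 1 n = insert 1 (Icc 2 n) := by
        ext j; simp [mem_Icc, Finset.mem_insert]; omega
      have hS1 : S 1 = 1 := by rw [hS]; simp
      have expand : (c 1 • (1:U) + V) * d = ∑ j ∈ Icc 1 n, c j • ((x:U)^j - (y:U)^j) := by
        rw [hIcc, Finset.sum_insert (by simp)]
        rw [add_mul, smul_mul_assoc, one_mul, hV, Finset.sum_mul]
        congr 1
        · rw [pow_one, pow_one, hd]
        · apply Finset.sum_congr rfl
          intro j _
          rw [smul_mul_assoc, geom j]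
      rw [expand]
      have : ∑ j ∈ Icc 1 n, c j • ((x:U)^j - (y:U)^j) = P x - P y := by
        rw [hP, ← Finset.sum_sub_distrib]
        apply Finset.sum_congr rfl
        intro j _
        rw [smul_sub]
      rw [this, hPxy, sub_self]
    have hd1 : d = (-V) * d := by
      have hsmul : c 1 • d = d := by
        have h1 : (c 1 - 1) • d = 0 := by
          apply hkill _ _ ?_ hdI
          have := hfc 1 (by omega)
          simpa using this
        rw [sub_smul, one_smul] at h1
        have := sub_eq_zero.1 h1
        exact this
      have h2 : c 1 • d + V * d = 0 := by
        rw [← hWd]; rw [add_mul, smul_mul_assoc, one_mul]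
      rw [hsmul] at h2
      rw [neg_mul]
      exact eq_neg_of_add_eq_zero_left h2
    have hiter : ∀ k : ℕ, d = (-V)^k * d := by
      intro k
      induction k with
      | zero => simp
      | succ k ih =>
        rw [pow_succ, mul_assoc, ← hd1]
        exact ih
    have hVk : (-V)^(n+1) = (0 : U) := by
      have hm : (-V)^(n+1) ∈ I ^ (n+1) := Ideal.pow_mem_pow (Submodule.neg_mem (R := U) I hVI) _
      rw [hnil] at hm
      simpa using hm
    have hd0 : d = 0 := by
      rw [hiter (n+1), hVk, zero_mul]
    have : (x : U) = (y : U) := by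
      have := sub_eq_zero.1 (hd ▸ hd0 : (x:U) - (y:U) = 0)
      exact this
    exact Unitization.inr_injective this
  have hbij : Function.Bijective f := Finite.injective_iff_bijective.1 hinj
  exact ⟨f, hbij, hom⟩


/-- Let `B` be a finite left brace of order `p^n` with `n + 2 ≤ p`. If the
multiplicative group `(B,·)` is abelian, then `(B,·) ≅ (B,+)`. -/
theorem stmt10 (p n : ℕ) (hp : p.Prime) (hn : n + 2 ≤ p)
    (B : Type*) [AddCommGroup B] [Group B] [Fintype B]
    (brace : ∀ a b c : B, a * (b + c) + a = a * b + a * c)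
    (hcard : Fintype.card B = p ^ n)
    (hcomm : ∀ a b : B, a * b = b * a) :
    Nonempty (B ≃* Multiplicative B) := by
  have h10 : (1 : B) = 0 := brace_one_eq_zero brace
  have hqr : ∀ a : B, a + a⁻¹ + (a * a⁻¹ - a - a⁻¹) = 0 := by
    intro a
    rw [mul_inv_cancel a, h10]
    abel
  obtain ⟨f, hbij, hhom⟩ := @brace_aux p n hp hn B (braceRing brace hcomm) _ hcard
    (fun a => ⟨a⁻¹, hqr a⟩)
  have hhom' : ∀ x y : B, f (x + y) = f x * f y := by
    intro x y
    have h2 : f (x + y) = f x + f y + (f x * f y - f x - f y) := hhom x y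
    rw [h2]; abel
  let e : Multiplicative B ≃ B :=
    (Multiplicative.toAdd (α := B)).trans (Equiv.ofBijective f hbij)
  have hmul : ∀ u v : Multiplicative B, e (u * v) = e u * e v := by
    intro u v
    exact hhom' u.toAdd v.toAdd
  exact ⟨(MulEquiv.mk' e hmul).symm⟩
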